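/- For the step set S = {-3, 2} with unit weights, the excursion generating function E(t) satisfies D(t, E) = 0, where D(t,z) = 1 - z + t^5 z^5 (2 - z + z^2) + t^{10} z^{10}. -/

import Mathlib

open PowerSeries

/-- A walk (list of steps) is an excursion over step set `S` if all its steps lie
in `S`, all its partial sums are non-negative, and its total sum is `0`. -/
def IsExcursion (S : Set ℤ) (l : List ℤ) : Prop :=
  (∀ x ∈ l, x ∈ S) ∧ (∀ m : ℕ, 0 ≤ ((l.take m).sum)) ∧ l.sum = 0

/-- The length generating function of excursions over the step set `S`. -/
noncomputable def excursionGF (S : Set ℤ) : PowerSeries ℚ :=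
  PowerSeries.mk fun n => (Nat.card {l : List ℤ // IsExcursion S l ∧ l.length = n} : ℚ)

/-- Walks with steps in `{-3,2}`, starting at height `h`, all proper-prefix heights
nonnegative, ending at height `s`. -/
def Good (h s : ℤ) (l : List ℤ) : Prop :=
  (∀ x ∈ l, x = -3 ∨ x = 2) ∧ (∀ m, m < l.length → 0 ≤ h + (l.take m).sum) ∧ h + l.sum = s

noncomputable def cnt (h s : ℤ) (n : ℕ) : ℕ :=
  Nat.card {l : List ℤ // Good h s l ∧ l.length = n}

noncomputable def w (h s : ℤ) : PowerSeries ℚ :=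
  PowerSeries.mk fun n => (cnt h s n : ℚ)

instance goodFinite (h s : ℤ) (n : ℕ) : Finite {l : List ℤ // Good h s l ∧ l.length = n} := by
  have hinj : Function.Injective
      (fun (x : {l : List ℤ // Good h s l ∧ l.length = n}) =>
        fun (i : Fin n) => decide (x.1.getD i 0 = 2)) := by
    intro x y hf
    apply Subtype.ext
    apply List.ext_getElem (by rw [x.2.2, y.2.2])
    intro i hi hi'
    have h1 : decide (x.1.getD i 0 = 2) = decide (y.1.getD i 0 = 2) :=
      congrFun hf ⟨i, by have := x.2.2; omega⟩
    rw [List.getD_eq_getElem _ _ hi, List.getD_eq_getElem _ _ hi',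
      decide_eq_decide] at h1
    have e1 := x.2.1.1 _ (x.1.getElem_mem hi)
    have e2 := y.2.1.1 _ (y.1.getElem_mem hi')
    rcases e1 with e1 | e1 <;> rcases e2 with e2 | e2 <;> simp [e1, e2] at h1 ⊢ <;> omega
  exact Finite.of_injective _ hinj

lemma cnt_len_zero (h s : ℤ) : cnt h s 0 = if s = h then 1 else 0 := by
  split_ifs with he
  · subst he
    rw [cnt, Nat.card_eq_one_iff_exists]
    refine ⟨⟨[], ⟨by simp, by simp, by simp⟩, rfl⟩, ?_⟩
    rintro ⟨l, hl, hlen⟩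
    rw [List.length_eq_zero_iff] at hlen
    subst hlen
    rfl
  · have : IsEmpty {l : List ℤ // Good h s l ∧ l.length = 0} := by
      constructor
      rintro ⟨l, hl, hlen⟩
      rw [List.length_eq_zero_iff] at hlen
      subst hlen
      obtain ⟨-, -, h3⟩ := hl
      simp at h3
      exact he h3.symm
    exact Nat.card_of_isEmpty

lemma cnt_neg {h : ℤ} (hh : h < 0) (s : ℤ) (n : ℕ) :
    cnt h s n = if s = h ∧ n = 0 then 1 else 0 := by
  cases n with
  | zero =>
    rw [cnt_len_zero]
    by_cases he : s = h <;> simp [he]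
  | succ n =>
    have : IsEmpty {l : List ℤ // Good h s l ∧ l.length = n + 1} := by
      constructor
      rintro ⟨l, ⟨-, hpre, -⟩, hlen⟩
      have h0 := hpre 0 (by omega)
      simp at h0
      omega
    simp [cnt, Nat.card_of_isEmpty]

lemma wneg {h : ℤ} (hh : h < 0) (s : ℤ) : w h s = if s = h then 1 else 0 := by
  ext n
  rw [w, coeff_mk, cnt_neg hh]
  by_cases he : s = h <;> by_cases hn : n = 0 <;>
    simp [he, hn, PowerSeries.coeff_one]

lemma cnt_zero_succ (s : ℤ) (n : ℕ) :
    cnt 0 s (n + 1) = (if s = -3 ∧ n = 0 then 1 else 0) + cnt 2 s n := by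
  by_cases hc : s = -3 ∧ n = 0
  · obtain ⟨rfl, rfl⟩ := hc
    rw [if_pos ⟨rfl, rfl⟩]
    have h2 : cnt 2 (-3) 0 = 0 := by rw [cnt_len_zero]; norm_num
    rw [h2]
    rw [cnt, Nat.card_eq_one_iff_exists]
    refine ⟨⟨[-3], ⟨?_, ?_, by simp⟩, rfl⟩, ?_⟩
    · intro x hx
      simp at hx
      exact Or.inl hx
    · intro m hm
      have hm0 : m = 0 := by simp at hm; omega
      subst hm0
      simp
    · rintro ⟨l, ⟨hst, hpre, hsum⟩, hlen⟩
      obtain ⟨a, rfl⟩ := List.length_eq_one_iff.mp hlen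
      apply Subtype.ext
      have ha := hst a (by simp)
      have hs' : (0 : ℤ) + a = -3 := by simpa using hsum
      have ha3 : a = -3 := by omega
      show [a] = [-3]
      rw [ha3]
  · rw [if_neg hc, zero_add]
    apply Nat.card_congr
    apply Equiv.symm
    refine Equiv.ofBijective
      (fun x : {l : List ℤ // Good 2 s l ∧ l.length = n} =>
        (⟨2 :: x.1, ⟨?_, ?_, ?_⟩, by simp [x.2.2]⟩ :
          {l : List ℤ // Good 0 s l ∧ l.length = n + 1})) ⟨?_, ?_⟩
    · intro y hy
      rcases List.mem_cons.mp hy with h' | h'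
      · right; exact h'
      · exact x.2.1.1 y h'
    · intro m hm
      cases m with
      | zero => simp
      | succ m =>
        rw [List.take_succ_cons, List.sum_cons]
        have := x.2.1.2.1 m (by
          have := x.2.2
          simp at hm
          omega)
        linarith
    · have := x.2.1.2.2
      rw [List.sum_cons]
      linarith
    · intro x y hxy
      apply Subtype.ext
      have := congrArg Subtype.val hxy
      simpa using this
    · rintro ⟨l, ⟨hst, hpre, hsum⟩, hlen⟩
      cases l with
      | nil => simp at hlen
      | cons a t =>
        have hlt : t.length = n := by simpa using hlen
        rcases hst a List.mem_cons_self with ha | ha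
        · subst ha
          cases t with
          | nil =>
            exfalso
            apply hc
            constructor
            · simpa using hsum.symm
            · simpa using hlen.symm
          | cons b t' =>
            exfalso
            have h1 := hpre 1 (by simp)
            simp at h1
        · subst ha
          refine ⟨⟨t, ⟨?_, ?_, ?_⟩, hlt⟩, ?_⟩
          · intro x hx
            exact hst x (List.mem_cons_of_mem _ hx)
          · intro m hm
            have := hpre (m + 1) (by simpa using hm)
            rw [List.take_succ_cons, List.sum_cons] at this
            linarith
          · rw [List.sum_cons] at hsum
            linarith
          · rfl

lemma wstep (s : ℤ) :
    w 0 s = (if s = 0 then 1 else 0) + X * w 2 s + (if s = -3 then X else 0) := by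
  ext n
  cases n with
  | zero =>
    simp only [map_add]
    rw [w, coeff_mk, cnt_len_zero]
    by_cases h0 : s = 0 <;> by_cases h3 : s = -3 <;>
      simp [h0, h3, PowerSeries.coeff_zero_eq_constantCoeff, map_mul]
  | succ n =>
    simp only [map_add]
    rw [PowerSeries.coeff_succ_X_mul, w, w, coeff_mk, coeff_mk, cnt_zero_succ]
    by_cases h0 : s = 0 <;> by_cases h3 : s = -3 <;>
      simp [h0, h3, PowerSeries.coeff_one, PowerSeries.coeff_X] <;>
      by_cases hn : n = 0 <;> simp [hn] <;> push_cast <;> ring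

def jv (j : Fin 3) : ℤ := -(j : ℕ) - 1

lemma jv_neg (j : Fin 3) : jv j < 0 := by
  simp only [jv]
  omega

lemma jv_inj {j₁ j₂ : Fin 3} (h : jv j₁ = jv j₂) : j₁ = j₂ := by
  simp only [jv] at h
  apply Fin.ext
  omega

lemma Good.app {h s j : ℤ} (hh : 0 < h) {a b : List ℤ}
    (ha : Good 0 j a) (hb : Good (h + j) s b) : Good h s (a ++ b) := by
  obtain ⟨ha1, ha2, ha3⟩ := ha
  obtain ⟨hb1, hb2, hb3⟩ := hb
  have hasum : a.sum = j := by simpa using ha3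
  refine ⟨?_, ?_, ?_⟩
  · intro x hx
    rcases List.mem_append.mp hx with h' | h'
    · exact ha1 x h'
    · exact hb1 x h'
  · intro m hm
    rw [List.take_append, List.sum_append]
    rcases lt_or_ge m a.length with hma | hma
    · have h0 : m - a.length = 0 := by omega
      rw [h0, List.take_zero]
      have := ha2 m hma
      simp only [List.sum_nil, add_zero]
      simp at this
      linarith
    · rw [List.take_of_length_le hma]
      have hm' : m - a.length < b.length := by
        rw [List.length_append] at hm
        omega
      have := hb2 (m - a.length) hm'
      linarith
  · rw [List.sum_append]
    linarith

lemma split_len_le {j : ℤ} (hj : j < 0) {a b a₂ b₂ : List ℤ}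
    (ha : Good 0 j a)
    (hpre₂ : ∀ m, m < a₂.length → 0 ≤ (0 : ℤ) + (a₂.take m).sum)
    (he : a ++ b = a₂ ++ b₂) : a₂.length ≤ a.length := by
  by_contra hlt
  push_neg at hlt
  have h1 : a = a₂.take a.length := by
    have h := congrArg (List.take a.length) he
    rw [List.take_append, List.take_append] at h
    rw [List.take_length, Nat.sub_self, List.take_zero, List.append_nil] at h
    rw [Nat.sub_eq_zero_of_le (le_of_lt hlt), List.take_zero, List.append_nil] at h
    exact h
  have h2 := hpre₂ a.length hlt
  rw [← h1] at h2
  have h3 : (0 : ℤ) + a.sum = j := ha.2.2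
  simp at h2
  linarith

lemma natCard_sigma {ι : Type*} [Fintype ι] (f : ι → Type*) [∀ i, Finite (f i)] :
    Nat.card (Σ i, f i) = ∑ i, Nat.card (f i) := by
  haveI := fun i => Fintype.ofFinite (f i)
  simp only [Nat.card_eq_fintype_card, Fintype.card_sigma]

lemma cnt_split {h s : ℤ} (hh : 0 < h) (hs : s < h) (n : ℕ) :
    cnt h s n = ∑ j : Fin 3, ∑ k ∈ Finset.range (n + 1),
      cnt 0 (jv j) k * cnt (h + jv j) s (n - k) := by
  classical
  have key : cnt h s n = Nat.card (Σ (j : Fin 3) (k : Fin (n + 1)),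
      {a : List ℤ // Good 0 (jv j) a ∧ a.length = (k : ℕ)} ×
      {b : List ℤ // Good (h + jv j) s b ∧ b.length = n - (k : ℕ)}) := by
    apply Nat.card_congr
    apply Equiv.symm
    refine Equiv.ofBijective
      (fun x => (⟨x.2.2.1.1 ++ x.2.2.2.1, Good.app hh x.2.2.1.2.1 x.2.2.2.2.1, by
        obtain ⟨j, k, ⟨a, ha, hal⟩, ⟨b, hb, hbl⟩⟩ := x
        have hk := k.isLt
        simp only [List.length_append, hal, hbl]
        omega⟩ : {l : List ℤ // Good h s l ∧ l.length = n})) ⟨?_, ?_⟩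
    · rintro ⟨j₁, k₁, ⟨a₁, ha₁, hal₁⟩, ⟨b₁, hb₁, hbl₁⟩⟩
        ⟨j₂, k₂, ⟨a₂, ha₂, hal₂⟩, ⟨b₂, hb₂, hbl₂⟩⟩ hxy
      have he : a₁ ++ b₁ = a₂ ++ b₂ := congrArg Subtype.val hxy
      have hlen : a₁.length = a₂.length :=
        le_antisymm (split_len_le (jv_neg j₂) ha₂ ha₁.2.1 he.symm)
          (split_len_le (jv_neg j₁) ha₁ ha₂.2.1 he)
      obtain ⟨rfl, rfl⟩ := List.append_inj he hlen
      have hj : j₁ = j₂ := by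
        apply jv_inj
        have h₁ := ha₁.2.2
        have h₂ := ha₂.2.2
        rw [← h₁, ← h₂]
      subst hj
      have hk : k₁ = k₂ := Fin.ext (by rw [← hal₁, ← hal₂])
      subst hk
      rfl
    · rintro ⟨l, ⟨hst, hpre, hsum⟩, rfl⟩
      have hex : ∃ m, (l.take m).sum < 0 :=
        ⟨l.length, by rw [List.take_length]; linarith⟩
      have hneg : (l.take (Nat.find hex)).sum < 0 := Nat.find_spec hex
      set m := Nat.find hex with hmdef
      have hmin : ∀ m', m' < m → 0 ≤ (l.take m').sum := fun m' hm' =>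
        not_lt.mp (Nat.find_min hex hm')
      have hml : m ≤ l.length :=
        Nat.find_min' hex (by rw [List.take_length]; linarith)
      have hm0 : 0 < m := by
        rcases Nat.eq_zero_or_pos m with h0 | h0
        · rw [h0] at hneg; simp at hneg
        · exact h0
      have hm1 : m - 1 < l.length := by omega
      have hsucc : m - 1 + 1 = m := by omega
      have hstep : (l.take m).sum = (l.take (m - 1)).sum + l[m - 1] := by
        conv_lhs => rw [← hsucc]
        exact List.sum_take_succ l (m - 1) hm1
      have hprev : 0 ≤ (l.take (m - 1)).sum := hmin (m - 1) (by omega)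
      have hx3 : l[m - 1]'hm1 = -3 := by
        rcases hst _ (List.getElem_mem hm1) with h' | h'
        · exact h'
        · exfalso; rw [h'] at hstep; linarith
      have ht3 : -3 ≤ (l.take m).sum := by rw [hstep, hx3]; linarith
      have hGa : Good 0 ((l.take m).sum) (l.take m) := by
        refine ⟨fun x hx => hst x (List.take_subset m l hx), ?_, zero_add _⟩
        intro m' hm'
        rw [List.length_take] at hm'
        rw [List.take_take]
        have hmm : m' ⊓ m = m' := min_eq_left (by omega)
        rw [hmm]
        have := hmin m' (by omega)
        linarith
      have hGb : Good (h + (l.take m).sum) s (l.drop m) := by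
        refine ⟨fun x hx => hst x (List.drop_subset m l hx), ?_, ?_⟩
        · intro m' hm'
          have hlt : m + m' < l.length := by rw [List.length_drop] at hm'; omega
          have h1 := hpre (m + m') hlt
          rw [List.take_add, List.sum_append] at h1
          linarith
        · have h2 : (l.take m).sum + (l.drop m).sum = l.sum := by
            rw [← List.sum_append, List.take_append_drop]
          linarith
      have hjv : ∀ hlt, jv ⟨(-(l.take m).sum - 1).toNat, hlt⟩ = (l.take m).sum := by
        intro hlt
        simp only [jv]
        omega
      refine ⟨⟨⟨(-(l.take m).sum - 1).toNat, by omega⟩, ⟨m, by omega⟩,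
        ⟨⟨l.take m, by rw [hjv]; exact hGa, ?_⟩,
         ⟨l.drop m, by rw [hjv]; exact hGb, ?_⟩⟩⟩, ?_⟩
      · rw [List.length_take]
        exact min_eq_left hml
      · exact List.length_drop
      · apply Subtype.ext
        exact List.take_append_drop m l
  rw [cnt] at key
  rw [cnt, key]
  rw [natCard_sigma]
  simp only [natCard_sigma, Nat.card_prod]
  refine Finset.sum_congr rfl fun j _ => ?_
  rw [← Fin.sum_univ_eq_sum_range (fun k => cnt 0 (jv j) k * cnt (h + jv j) s (n - k)) (n + 1)]
  exact Finset.sum_congr rfl fun k _ => rfl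

lemma wsplit {h s : ℤ} (hh : 0 < h) (hs : s < h) :
    w h s = w 0 (-1) * w (h + -1) s + w 0 (-2) * w (h + -2) s
      + w 0 (-3) * w (h + -3) s := by
  ext n
  simp only [map_add, PowerSeries.coeff_mul,
    Finset.Nat.sum_antidiagonal_eq_sum_range_succ_mk]
  simp only [w, coeff_mk]
  rw [cnt_split hh hs, Fin.sum_univ_three]
  have j0 : jv 0 = -1 := by decide
  have j1 : jv 1 = -2 := by decide
  have j2 : jv 2 = -3 := by decide
  rw [j0, j1, j2]
  push_cast
  ring

lemma wExc : excursionGF {-3, 2} = w 0 0 := by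
  ext n
  rw [excursionGF, w, coeff_mk, coeff_mk]
  simp only [cnt]
  congr 1
  apply Nat.card_congr
  apply Equiv.subtypeEquivRight
  intro l
  constructor
  · rintro ⟨⟨hst, hpre, hsum⟩, hlen⟩
    refine ⟨⟨?_, ?_, ?_⟩, hlen⟩
    · intro x hx
      have := hst x hx
      simpa [Set.mem_insert_iff] using this
    · intro m _
      simpa using hpre m
    · simpa using hsum
  · rintro ⟨⟨hst, hpre, hsum⟩, hlen⟩
    have hsum' : l.sum = 0 := by simpa using hsum
    refine ⟨⟨?_, ?_, hsum'⟩, hlen⟩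
    · intro x hx
      rcases hst x hx with h' | h' <;> simp [h']
    · intro m
      rcases lt_or_ge m l.length with hm | hm
      · simpa using hpre m hm
      · rw [List.take_of_length_le hm, hsum']

/-- For `S = {-3, 2}`, `D(t,E) = 0` with
`D(t,z) = 1 - z + t⁵z⁵(2 - z + z²) + t¹⁰z¹⁰`. -/
theorem excursion_minus3_2 :
    (1 : PowerSeries ℚ) - excursionGF {-3, 2} +
      PowerSeries.X ^ 5 * excursionGF {-3, 2} ^ 5 *
        (2 - excursionGF {-3, 2} + excursionGF {-3, 2} ^ 2) +
      PowerSeries.X ^ 10 * excursionGF {-3, 2} ^ 10 = 0 := by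
  rw [wExc]
  have w1 : ∀ s : ℤ, s < 1 → w 1 s = w 0 (-1) * w 0 s
      + w 0 (-2) * (if s = (-1 : ℤ) then 1 else 0)
      + w 0 (-3) * (if s = (-2 : ℤ) then 1 else 0) := by
    intro s hs
    rw [wsplit one_pos hs,
      show (1 : ℤ) + -1 = 0 by norm_num,
      show (1 : ℤ) + -2 = -1 by norm_num,
      show (1 : ℤ) + -3 = -2 by norm_num,
      wneg (by norm_num : (-1 : ℤ) < 0), wneg (by norm_num : (-2 : ℤ) < 0)]
  have w2 : ∀ s : ℤ, s < 2 → w 2 s = w 0 (-1) * w 1 s + w 0 (-2) * w 0 s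
      + w 0 (-3) * (if s = (-1 : ℤ) then 1 else 0) := by
    intro s hs
    rw [wsplit two_pos hs,
      show (2 : ℤ) + -1 = 1 by norm_num,
      show (2 : ℤ) + -2 = 0 by norm_num,
      show (2 : ℤ) + -3 = -1 by norm_num,
      wneg (by norm_num : (-1 : ℤ) < 0)]
  have e0 : w 0 0 = 1 + X * ((w 0 (-1))^2 + w 0 (-2)) * w 0 0 := by
    have h1 := w1 0 (by norm_num)
    have h2 := w2 0 (by norm_num)
    have hs := wstep 0
    norm_num at h1 h2 hs
    linear_combination hs + X * h2 + X * w 0 (-1) * h1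
  have e1 : w 0 (-1) = X * ((w 0 (-1))^3 + 2 * w 0 (-1) * w 0 (-2) + w 0 (-3)) := by
    have h1 := w1 (-1) (by norm_num)
    have h2 := w2 (-1) (by norm_num)
    have hs := wstep (-1)
    norm_num at h1 h2 hs
    linear_combination hs + X * h2 + X * w 0 (-1) * h1
  have e2 : w 0 (-2) = X * ((w 0 (-1))^2 * w 0 (-2) + (w 0 (-2))^2
      + w 0 (-1) * w 0 (-3)) := by
    have h1 := w1 (-2) (by norm_num)
    have h2 := w2 (-2) (by norm_num)
    have hs := wstep (-2)
    norm_num at h1 h2 hs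
    linear_combination hs + X * h2 + X * w 0 (-1) * h1
  have e3 : w 0 (-3) = X + X * ((w 0 (-1))^2 * w 0 (-3) + w 0 (-2) * w 0 (-3)) := by
    have h1 := w1 (-3) (by norm_num)
    have h2 := w2 (-3) (by norm_num)
    have hs := wstep (-3)
    norm_num at h1 h2 hs
    linear_combination hs + X * h2 + X * w 0 (-1) * h1
  have hunit : (1 - X * ((w 0 (-1))^2 + w 0 (-2))) ≠ 0 := by
    intro hcontra
    have := congrArg (PowerSeries.constantCoeff (R := ℚ)) hcontra
    simp [map_sub, map_mul] at this
  have hq3 : w 0 (-3) = X * w 0 0 := by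
    have hz : (1 - X * ((w 0 (-1))^2 + w 0 (-2))) * (w 0 (-3) - X * w 0 0) = 0 := by
      linear_combination e3 - X * e0
    rcases mul_eq_zero.mp hz with h' | h'
    · exact absurd h' hunit
    · exact sub_eq_zero.mp h'
  have hq1' : w 0 (-1) = (w 0 (-1) * w 0 (-2) + w 0 (-3)) * w 0 (-3) := by
    linear_combination w 0 0 * e1 - w 0 (-1) * e0 - (w 0 (-1) * w 0 (-2) + w 0 (-3)) * hq3
  have hq2' : w 0 (-2) = w 0 (-1) * (w 0 (-3))^2 := by
    linear_combination w 0 0 * e2 - w 0 (-2) * e0 - w 0 (-1) * w 0 (-3) * hq3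
  have hE' : w 0 0 = 1 + (w 0 (-1))^2 * w 0 (-3) + w 0 (-1) * (w 0 (-3))^3 := by
    linear_combination e0 - ((w 0 (-1))^2 + w 0 (-2)) * hq3 + w 0 (-3) * hq2'
  have hq'' : w 0 (-1) = (w 0 (-1))^2 * (w 0 (-3))^3 + (w 0 (-3))^2 := by
    linear_combination hq1' + w 0 (-1) * w 0 (-3) * hq2'
  have key' : (1 : PowerSeries ℚ) - w 0 0 + (w 0 (-3))^5 * (2 - w 0 0 + (w 0 0)^2)
      + (w 0 (-3))^10 = 0 := by
    rw [hE']
    linear_combination (-((w 0 (-3))^4 * (w 0 (-1))^2 + 2 * (w 0 (-3))^6 * w 0 (-1)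
      + w 0 (-3) * w 0 (-1) + (w 0 (-3))^8 + 2 * (w 0 (-3))^3)) * hq''
  have key : (1 : PowerSeries ℚ) - w 0 0 + (X * w 0 0)^5 * (2 - w 0 0 + (w 0 0)^2)
      + (X * w 0 0)^10 = 0 := by
    rw [← hq3]
    exact key'
  linear_combination key
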